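/- Let M ≥ 1 and for each λ ∈ L_M define the type II extension coefficients: μ^{±,0}_λ = Re((3+√3·i)·Φ_λ(1/M,0)), μ^{±,1}_λ = 0, μ^{±,2}_λ = Re((3−√3·i)·Φ_λ(1/M,0)) ± 3·|Φ_λ(1/M,0)|. Then for every λ ∈ L_M: (i) the intertwining function β(λ) = 0; (ii) μ^±(λ) = 9·|Φ_λ(1/M,0)|·(2·|Φ_λ(1/M,0)| ± Re((1−√3·i)·Φ_λ(1/M,0))); (iii) μ^+(λ) > 0 and μ^−(λ) > 0. -/

import Mathlib

open Finset

/-- The point set `F_{P,M}`: triples of nonnegative integers summing to `M`. -/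
def FPM (M : ℕ) : Finset (ℕ × ℕ × ℕ) :=
  (Finset.range (M+1) ×ˢ Finset.range (M+1) ×ˢ Finset.range (M+1)).filter
    (fun s => s.1 + s.2.1 + s.2.2 = M)

/-- The point set `F_{Q,M}`: triples of `F_{P,M}` with `s1 + 2 s2 ≡ 0 (mod 3)`. -/
def FQM (M : ℕ) : Finset (ℕ × ℕ × ℕ) :=
  (FPM M).filter (fun s => (s.2.1 + 2 * s.2.2) % 3 = 0)

/-- The honeycomb point set `H_M = F_{P,M} \ F_{Q,M}`. -/
def HM (M : ℕ) : Finset (ℕ × ℕ × ℕ) := FPM M \ FQM M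

/-- The interior point set `F̃_{P,M}`: triples of strictly positive integers summing to `M`. -/
def FPMint (M : ℕ) : Finset (ℕ × ℕ × ℕ) :=
  (FPM M).filter (fun s => 0 < s.1 ∧ 0 < s.2.1 ∧ 0 < s.2.2)

/-- The interior point set `F̃_{Q,M}`. -/
def FQMint (M : ℕ) : Finset (ℕ × ℕ × ℕ) :=
  (FPMint M).filter (fun s => (s.2.1 + 2 * s.2.2) % 3 = 0)

/-- The interior honeycomb point set `H̃_M = F̃_{P,M} \ F̃_{Q,M}`. -/
def HMint (M : ℕ) : Finset (ℕ × ℕ × ℕ) := FPMint M \ FQMint M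

/-- The weight set `L_M ⊆ Λ_{Q,M}`. -/
def LM (M : ℕ) : Finset (ℕ × ℕ × ℕ) :=
  (FPM M).filter (fun l => (l.2.1 < l.1 ∧ l.2.2 < l.1) ∨ (l.1 = l.2.1 ∧ l.2.2 < l.1))

/-- The interior weight set `L̃_M`: elements of `L_M` with all coordinates positive. -/
def LMint (M : ℕ) : Finset (ℕ × ℕ × ℕ) :=
  (LM M).filter (fun l => 0 < l.1 ∧ 0 < l.2.1 ∧ 0 < l.2.2)

/-- A triple `s ∈ F_{P,M}` is identified with the point `(s1/M, s2/M)`. -/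
noncomputable def pt (M : ℕ) (s : ℕ × ℕ × ℕ) : ℝ × ℝ :=
  ((s.2.1 : ℝ) / M, (s.2.2 : ℝ) / M)

/-- The Weyl group orbit of the weight `λ` (ordered list, in `ω`-coordinates). -/
def orbit (l : ℕ × ℕ × ℕ) : List (ℤ × ℤ) :=
  [(2*(l.2.1:ℤ)+l.2.2, (l.2.1:ℤ)+2*l.2.2),
   (-(l.2.1:ℤ)+l.2.2, (l.2.1:ℤ)+2*l.2.2),
   (-(l.2.1:ℤ)-2*l.2.2, (l.2.1:ℤ)-l.2.2),
   (-(l.2.1:ℤ)-2*l.2.2, -2*(l.2.1:ℤ)-l.2.2),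
   (-(l.2.1:ℤ)+l.2.2, -2*(l.2.1:ℤ)-l.2.2),
   (2*(l.2.1:ℤ)+l.2.2, (l.2.1:ℤ)-l.2.2)]

/-- The signs `(+,−,+,−,+,−)` attached to the six orbit points for `S`-functions. -/
def orbitSigns : List ℤ := [1, -1, 1, -1, 1, -1]

/-- The Weyl orbit `C`-function `Φ_λ` of `A₂`. -/
noncomputable def PhiC (l : ℕ × ℕ × ℕ) (x : ℝ × ℝ) : ℂ :=
  ((orbit l).map (fun p =>
    Complex.exp (2 * Real.pi * Complex.I / 3 * ((p.1 : ℂ) * (x.1 : ℂ) + (p.2 : ℂ) * (x.2 : ℂ))))).sum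

/-- The Weyl orbit `S`-function `φ_λ` of `A₂`. -/
noncomputable def PhiS (l : ℕ × ℕ × ℕ) (x : ℝ × ℝ) : ℂ :=
  ((orbitSigns.zip (orbit l)).map (fun p => (p.1 : ℂ) *
    Complex.exp (2 * Real.pi * Complex.I / 3 * ((p.2.1 : ℂ) * (x.1 : ℂ) + (p.2.2 : ℂ) * (x.2 : ℂ))))).sum

/-- The Hartley kernel `cas t = cos t + sin t`. -/
noncomputable def cas (t : ℝ) : ℝ := Real.cos t + Real.sin t

/-- The Hartley `C`-function `ζ¹_λ` of `A₂`. -/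
noncomputable def zetaC (l : ℕ × ℕ × ℕ) (x : ℝ × ℝ) : ℝ :=
  ((orbit l).map (fun p => cas (2 * Real.pi / 3 * ((p.1 : ℝ) * x.1 + (p.2 : ℝ) * x.2)))).sum

/-- The Hartley `S`-function `ζ^e_λ` of `A₂`. -/
noncomputable def zetaS (l : ℕ × ℕ × ℕ) (x : ℝ × ℝ) : ℝ :=
  ((orbitSigns.zip (orbit l)).map (fun p => (p.1 : ℝ) *
    cas (2 * Real.pi / 3 * ((p.2.1 : ℝ) * x.1 + (p.2.2 : ℝ) * x.2)))).sum

/-- The number of zero entries of a triple. -/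
def zeroCount (s : ℕ × ℕ × ℕ) : ℕ :=
  (if s.1 = 0 then 1 else 0) + (if s.2.1 = 0 then 1 else 0) + (if s.2.2 = 0 then 1 else 0)

/-- The discrete function `ε`: values `6, 3, 1` for zero, one, two zero entries. -/
def epsF (s : ℕ × ℕ × ℕ) : ℕ :=
  if zeroCount s = 0 then 6 else if zeroCount s = 1 then 3 else 1

/-- The discrete function `h_M`: values `1, 2, 6` for zero, one, two zero entries. -/
def hMF (l : ℕ × ℕ × ℕ) : ℕ :=
  if zeroCount l = 0 then 1 else if zeroCount l = 1 then 2 else 6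

/-- The elements `γ₀ = id`, `γ₁`, `γ₂` of `Γ_M` acting as cyclic permutations of Kac
coordinates: `γ₁[λ0,λ1,λ2] = [λ2,λ0,λ1]`, `γ₂[λ0,λ1,λ2] = [λ1,λ2,λ0]`. -/
def gam (k : Fin 3) (l : ℕ × ℕ × ℕ) : ℕ × ℕ × ℕ :=
  if k = 0 then l else if k = 1 then (l.2.2, l.1, l.2.1) else (l.2.1, l.2.2, l.1)

/-- The normalization function `μ` of a triple of extension coefficients. -/
noncomputable def muNorm (a b c : ℂ) : ℝ :=
  ‖a‖ ^ 2 + ‖b‖ ^ 2 + ‖c‖ ^ 2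
    - (a * starRingEnd ℂ b + a * starRingEnd ℂ c + b * starRingEnd ℂ c).re

/-- The intertwining function `β` of two triples of extension coefficients. -/
noncomputable def betaFun (a b c a' b' c' : ℂ) : ℂ :=
  2 * (a * starRingEnd ℂ a' + b * starRingEnd ℂ b' + c * starRingEnd ℂ c')
    - a * (starRingEnd ℂ b' + starRingEnd ℂ c')
    - b * (starRingEnd ℂ a' + starRingEnd ℂ c')
    - c * (starRingEnd ℂ a' + starRingEnd ℂ b')

/-- The extended `C`-function `Φ^t_λ` with extension coefficients `μ0, μ1, μ2`. -/
noncomputable def PhiCExt (μ0 μ1 μ2 : ℂ) (l : ℕ × ℕ × ℕ) (x : ℝ × ℝ) : ℂ :=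
  μ0 * PhiC l x + μ1 * PhiC (gam 1 l) x + μ2 * PhiC (gam 2 l) x

/-- The extended `S`-function `φ^t_λ` with extension coefficients `μ0, μ1, μ2`. -/
noncomputable def PhiSExt (μ0 μ1 μ2 : ℂ) (l : ℕ × ℕ × ℕ) (x : ℝ × ℝ) : ℂ :=
  μ0 * PhiS l x + μ1 * PhiS (gam 1 l) x + μ2 * PhiS (gam 2 l) x

/-- The extended Hartley `C`-function `ζ^{1,t}_λ` with extension coefficients `μ0, μ1, μ2`. -/
noncomputable def zetaCExt (μ0 μ1 μ2 : ℂ) (l : ℕ × ℕ × ℕ) (x : ℝ × ℝ) : ℂ :=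
  μ0 * (zetaC l x : ℂ) + μ1 * (zetaC (gam 1 l) x : ℂ) + μ2 * (zetaC (gam 2 l) x : ℂ)

/-- The extended Hartley `S`-function `ζ^{e,t}_λ` with extension coefficients `μ0, μ1, μ2`. -/
noncomputable def zetaSExt (μ0 μ1 μ2 : ℂ) (l : ℕ × ℕ × ℕ) (x : ℝ × ℝ) : ℂ :=
  μ0 * (zetaS l x : ℂ) + μ1 * (zetaS (gam 1 l) x : ℂ) + μ2 * (zetaS (gam 2 l) x : ℂ)

section Aux
open Real

theorem trig3aux (A B : ℝ) : Real.sin (2*A) + Real.sin (2*B) + Real.sin (2*(-(π/2) - A - B)) = -4 * Real.cos A * Real.cos B * Real.cos (-(π/2) - A - B) := by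
  have h1 : (2*(-(π/2) - A - B)) = -(π + (2*A+2*B)) := by ring
  have h2 : -(π/2) - A - B = -(π/2 + (A+B)) := by ring
  rw [h1, h2, Real.sin_neg, Real.cos_neg, Real.sin_add π, Real.cos_add (π/2),
    Real.sin_pi, Real.cos_pi, Real.sin_pi_div_two, Real.cos_pi_div_two]
  rw [show 2*A+2*B = 2*(A+B) by ring, Real.sin_two_mul, Real.sin_two_mul, Real.sin_two_mul,
    Real.sin_add, Real.cos_add]
  linear_combination (-2*Real.sin A*Real.cos A)*(Real.sin_sq_add_cos_sq B) + (-2*Real.sin B*Real.cos B)*(Real.sin_sq_add_cos_sq A)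

theorem cos_ne_aux (M : ℕ) (hM : 1 ≤ M) (p : ℤ) (hlow : -(2*(M:ℤ)) ≤ p) (hhigh : p ≤ 2*(M:ℤ))
    (h1 : p ≠ 2*(M:ℤ)) (h2 : p ≠ -(M:ℤ)) :
    Real.cos (Real.pi * (p:ℝ) / (3*M) - Real.pi/6) ≠ 0 := by
  intro h
  rw [Real.cos_eq_zero_iff] at h
  obtain ⟨k, hk⟩ := h
  have hM' : (M:ℝ) ≠ 0 := Nat.cast_ne_zero.mpr (by omega)
  have hπ : (π:ℝ) ≠ 0 := Real.pi_ne_zero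
  field_simp at hk
  have hr : (2*(p:ℝ) - M) = (2*(k:ℝ)+1)*(3*M) := by
    apply mul_left_cancel₀ hπ
    linear_combination π * hk / 6
  have hz : 2*p - (M:ℤ) = (2*k+1)*(3*M) := by exact_mod_cast hr
  have hp : p = 3*M*k + 2*M := by nlinarith [hz]
  have hk1 : -2 < k := by
    by_contra hc
    push_neg at hc
    have : 3*(M:ℤ)*k ≤ 3*M*(-2) := by
      apply mul_le_mul_of_nonneg_left hc (by positivity)
    omega
  have hk2 : k ≤ 0 := by
    by_contra hc
    push_neg at hc
    have : 3*(M:ℤ)*1 ≤ 3*M*k := by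
      apply mul_le_mul_of_nonneg_left hc (by positivity)
    omega
  interval_cases k <;> omega

theorem keylem_aux (M : ℕ) (hM : 1 ≤ M) (l0 u v : ℕ) (hsum : l0 + u + v = M)
    (hcond : (u < l0 ∧ v < l0) ∨ (l0 = u ∧ v < l0)) :
    (PhiC (l0,u,v) ((1:ℝ)/M, 0)).im - Real.sqrt 3 * (PhiC (l0,u,v) ((1:ℝ)/M, 0)).re ≠ 0 := by
  have hz : PhiC (l0,u,v) ((1:ℝ)/M, 0) =
      2 * (Complex.exp ((2*π*(2*(u:ℝ)+v)/(3*M) : ℝ) * Complex.I)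
        + Complex.exp ((2*π*((v:ℝ)-u)/(3*M) : ℝ) * Complex.I)
        + Complex.exp ((2*π*(-(u:ℝ)-2*v)/(3*M) : ℝ) * Complex.I)) := by
    simp only [PhiC, orbit, List.map_cons, List.map_nil, List.sum_cons, List.sum_nil]
    push_cast
    ring_nf
  set t1 : ℝ := 2*π*(2*(u:ℝ)+v)/(3*M) with ht1
  set t2 : ℝ := 2*π*((v:ℝ)-u)/(3*M) with ht2
  set t3 : ℝ := 2*π*(-(u:ℝ)-2*v)/(3*M) with ht3
  have hre : (PhiC (l0,u,v) ((1:ℝ)/M, 0)).re = 2*(Real.cos t1 + Real.cos t2 + Real.cos t3) := by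
    rw [hz]; simp [Complex.exp_ofReal_mul_I_re]
  have him : (PhiC (l0,u,v) ((1:ℝ)/M, 0)).im = 2*(Real.sin t1 + Real.sin t2 + Real.sin t3) := by
    rw [hz]; simp [Complex.exp_ofReal_mul_I_im]
  rw [hre, him]
  set A1 : ℝ := π*(2*(u:ℝ)+v)/(3*M) - π/6 with hA1
  set A2 : ℝ := π*((v:ℝ)-u)/(3*M) - π/6 with hA2
  have hA3 : π*(-(u:ℝ)-2*v)/(3*M) - π/6 = -(π/2) - A1 - A2 := by
    rw [hA1, hA2]; field_simp; ring
  have hshift : ∀ t : ℝ, Real.sin t - Real.sqrt 3 * Real.cos t = 2 * Real.sin (t - π/3) := by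
    intro t
    rw [Real.sin_sub, Real.sin_pi_div_three, Real.cos_pi_div_three]
    ring
  have e1 : t1 - π/3 = 2*A1 := by rw [ht1, hA1]; ring
  have e2 : t2 - π/3 = 2*A2 := by rw [ht2, hA2]; ring
  have e3 : t3 - π/3 = 2*(-(π/2) - A1 - A2) := by rw [ht3, ← hA3]; ring
  have main : 2*(Real.sin t1 + Real.sin t2 + Real.sin t3)
      - Real.sqrt 3 * (2*(Real.cos t1 + Real.cos t2 + Real.cos t3))
      = -16 * (Real.cos A1 * Real.cos A2 * Real.cos (-(π/2) - A1 - A2)) := by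
    have hs1 := hshift t1
    have hs2 := hshift t2
    have hs3 := hshift t3
    have htr := trig3aux A1 A2
    rw [e1] at hs1
    rw [e2] at hs2
    rw [e3] at hs3
    linarith [htr]
  rw [main]
  have hMne : (M:ℝ) ≠ 0 := Nat.cast_ne_zero.mpr (by omega)
  have c1 : Real.cos A1 ≠ 0 := by
    have := cos_ne_aux M hM (2*(u:ℤ)+v) (by omega) (by omega) (by omega) (by omega)
    convert this using 3
    push_cast; ring
  have c2 : Real.cos A2 ≠ 0 := by
    have := cos_ne_aux M hM ((v:ℤ)-u) (by omega) (by omega) (by omega) (by omega)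
    convert this using 3
    push_cast; ring
  have c3 : Real.cos (-(π/2) - A1 - A2) ≠ 0 := by
    have := cos_ne_aux M hM (-(u:ℤ)-2*v) (by omega) (by omega) (by omega) (by omega)
    rw [← hA3]
    convert this using 3
    push_cast; ring
  exact mul_ne_zero (by norm_num) (mul_ne_zero (mul_ne_zero c1 c2) c3)

end Aux

set_option maxHeartbeats 2000000

/-- the type II extension coefficients satisfy `β(λ) = 0`, the stated
formula for `μ^±(λ)`, and `μ^±(λ) > 0` for every `λ ∈ L_M`. -/
theorem typeII_coefficients (M : ℕ) (hM : 1 ≤ M)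
    (lam : ℕ × ℕ × ℕ) (hl : lam ∈ LM M) :
    let z : ℂ := PhiC lam ((1 : ℝ) / M, 0)
    let a : ℝ := ((3 + Real.sqrt 3 * Complex.I) * z).re
    let cp : ℝ := ((3 - Real.sqrt 3 * Complex.I) * z).re + 3 * ‖z‖
    let cm : ℝ := ((3 - Real.sqrt 3 * Complex.I) * z).re - 3 * ‖z‖
    betaFun (a : ℂ) 0 (cp : ℂ) (a : ℂ) 0 (cm : ℂ) = 0
    ∧ muNorm (a : ℂ) 0 (cp : ℂ) =
        9 * ‖z‖ * (2 * ‖z‖ + ((1 - Real.sqrt 3 * Complex.I) * z).re)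
    ∧ muNorm (a : ℂ) 0 (cm : ℂ) =
        9 * ‖z‖ * (2 * ‖z‖ - ((1 - Real.sqrt 3 * Complex.I) * z).re)
    ∧ 0 < muNorm (a : ℂ) 0 (cp : ℂ)
    ∧ 0 < muNorm (a : ℂ) 0 (cm : ℂ) := by
  obtain ⟨l0, u, v⟩ := lam
  simp only [LM, FPM, Finset.mem_filter, Finset.mem_product, Finset.mem_range] at hl
  have hsum : l0 + u + v = M := hl.1.2
  have hcond : (u < l0 ∧ v < l0) ∨ (l0 = u ∧ v < l0) := hl.2
  intro z a cp cm
  have hkey : z.im - Real.sqrt 3 * z.re ≠ 0 := keylem_aux M hM l0 u v hsum hcond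
  set q : ℝ := Real.sqrt 3 with hq
  set r : ℝ := ‖z‖ with hrdef
  have hs3 : q^2 = 3 := Real.sq_sqrt (by norm_num)
  have hr2 : r^2 = z.re^2 + z.im^2 := by
    rw [hrdef, Complex.sq_norm, Complex.normSq_apply]; ring
  have hr0 : 0 ≤ r := norm_nonneg z
  have ha : a = 3*z.re - q*z.im := by
    have h0 : a = ((3 + (q:ℂ) * Complex.I) * z).re := rfl
    rw [h0]
    simp [Complex.mul_re, Complex.add_re, Complex.add_im, Complex.ofReal_re, Complex.ofReal_im,
      Complex.I_re, Complex.I_im, Complex.mul_im]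
  have hcp : cp = (3*z.re + q*z.im) + 3*r := by
    have h0 : cp = ((3 - (q:ℂ) * Complex.I) * z).re + 3 * ‖z‖ := rfl
    rw [h0]
    simp [Complex.mul_re, Complex.sub_re, Complex.sub_im, Complex.ofReal_re, Complex.ofReal_im,
      Complex.I_re, Complex.I_im, Complex.mul_im, ← hrdef]
  have hcm : cm = (3*z.re + q*z.im) - 3*r := by
    have h0 : cm = ((3 - (q:ℂ) * Complex.I) * z).re - 3 * ‖z‖ := rfl
    rw [h0]
    simp [Complex.mul_re, Complex.sub_re, Complex.sub_im, Complex.ofReal_re, Complex.ofReal_im,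
      Complex.I_re, Complex.I_im, Complex.mul_im, ← hrdef]
  have hu0 : ((1 - (q:ℂ) * Complex.I) * z).re = z.re + q*z.im := by
    simp [Complex.mul_re, Complex.sub_re, Complex.sub_im, Complex.ofReal_re, Complex.ofReal_im,
      Complex.I_re, Complex.I_im, Complex.mul_im]
  clear_value z a cp cm
  have hmu : ∀ aa cc : ℝ, muNorm (aa:ℂ) 0 (cc:ℂ) = aa^2 + cc^2 - aa*cc := by
    intro aa cc
    simp [muNorm, Complex.conj_ofReal, Complex.norm_real, Real.norm_eq_abs, _root_.sq_abs,
      ← Complex.ofReal_mul]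
  have hbeta : betaFun (a:ℂ) 0 (cp:ℂ) (a:ℂ) 0 (cm:ℂ) = 0 := by
    have hb : betaFun (a:ℂ) 0 (cp:ℂ) (a:ℂ) 0 (cm:ℂ)
        = ((2*(a*a + cp*cm) - a*cm - cp*a : ℝ) : ℂ) := by
      simp [betaFun, Complex.conj_ofReal]
    rw [hb]
    norm_cast
    rw [ha, hcp, hcm]
    linear_combination 6*z.im^2*hs3 - 18*hr2
  have hmup : muNorm (a:ℂ) 0 (cp:ℂ)
      = 9 * r * (2 * r + ((1 - (q:ℂ) * Complex.I) * z).re) := by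
    rw [hmu a cp, hu0, ha, hcp]
    linear_combination 3*z.im^2*hs3 - 9*hr2
  have hmum : muNorm (a:ℂ) 0 (cm:ℂ)
      = 9 * r * (2 * r - ((1 - (q:ℂ) * Complex.I) * z).re) := by
    rw [hmu a cm, hu0, ha, hcm]
    linear_combination 3*z.im^2*hs3 - 9*hr2
  have hD2 : 0 < (z.im - q*z.re)^2 := by
    rcases hkey.lt_or_gt with h | h <;> nlinarith
  have h4 : (z.re + q*z.im)^2 + (z.im - q*z.re)^2 = 4*r^2 := by
    linear_combination (z.re^2+z.im^2)*hs3 - 4*hr2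
  have hrpos : 0 < r := by nlinarith [sq_nonneg (z.re + q*z.im)]
  have hplus : 0 < 2*r + (z.re + q*z.im) := by
    by_contra hc
    push_neg at hc
    have h1 : z.re + q*z.im ≤ -(2*r) := by linarith
    have h2 : (2*r)*(2*r) ≤ (-(z.re + q*z.im))*(-(z.re + q*z.im)) :=
      mul_self_le_mul_self (by linarith) (by linarith)
    nlinarith
  have hminus : 0 < 2*r - (z.re + q*z.im) := by
    by_contra hc
    push_neg at hc
    have h1 : 2*r ≤ z.re + q*z.im := by linarith
    have h2 : (2*r)*(2*r) ≤ (z.re + q*z.im)*(z.re + q*z.im) :=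
      mul_self_le_mul_self (by linarith) (by linarith)
    nlinarith
  refine ⟨hbeta, ?_, ?_, ?_, ?_⟩
  · rw [hmup, hu0]
  · rw [hmum, hu0]
  · rw [hmup, hu0]
    nlinarith
  · rw [hmum, hu0]
    nlinarith
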